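/- Consider the concatenated code A·B with outer minimum distance d_a and inner minimum distance d_b, decoded by performing minimum-distance decoding of each of the M rows with B, assigning row j reliability weight α_j = (d_b − w_j)/d_b where w_j = 2·wt(Ê_j) if 2·wt(Ê_j) < d_b and w_j = d_b on row-decoding failure, followed by GMD decoding of each column with A. This decoder correctly recovers the transmitted codeword for every error pattern E satisfying Σ_{i ∈ [M]} min{wt(E_i), d_b} < d_a·d_b / 2. -/

import Mathlib

/-- Correctness of the decoder for concatenated codes `A·B`:  each row of the
received word `R = W + E` is decoded with a minimum-distance decoder for the
inner code (`What j` is the output on row `j`; `fail` is the set of rows on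
which the row decoder fails, i.e. where no codeword of `B` lies within half the
minimum distance `d_b`).  Row `j` is assigned the reliability weight
`α_j = (d_b − w_j)/d_b`, with `w_j = 2·wt(Ê_j)` on success and `w_j = d_b` on
failure.  If `Σ_j min{wt(E_j), d_b} < d_a·d_b/2`, then Forney's GMD condition
`Σ_{j ∈ I_C}(1 − α_j) + Σ_{j ∈ I_E}(1 + α_j) < d_a` holds (with
`I_E` the set of incorrectly decoded rows), so the GMD decoder for the outer
code recovers every column of the transmitted codeword. -/
theorem concatenated_decoder_corrects
    {Fq : Type*} [Field Fq] [Fintype Fq] [DecidableEq Fq]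
    {M N da db : ℕ} (hdb : 0 < db)
    (Bcode : Set (Fin N → Fq))
    (hB : ∀ u ∈ Bcode, ∀ v ∈ Bcode, u ≠ v → db ≤ hammingDist u v)
    (W E : Fin M → Fin N → Fq) (hW : ∀ j, W j ∈ Bcode)
    (What : Fin M → Fin N → Fq) (fail : Finset (Fin M))
    (hdec1 : ∀ j ∉ fail,
      What j ∈ Bcode ∧ 2 * hammingDist (W j + E j) (What j) < db)
    (hdec2 : ∀ j ∈ fail, ¬ ∃ c ∈ Bcode, 2 * hammingDist (W j + E j) c < db)
    (hE : 2 * ∑ j, min (hammingNorm (E j)) db < da * db) :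
    (∑ j ∈ Finset.univ.filter fun j => What j = W j,
      (1 - (if j ∈ fail then 0 else
        ((db : ℝ) - 2 * (hammingDist (W j + E j) (What j) : ℝ)) / (db : ℝ)))) +
    (∑ j ∈ Finset.univ.filter fun j => What j ≠ W j,
      (1 + (if j ∈ fail then 0 else
        ((db : ℝ) - 2 * (hammingDist (W j + E j) (What j) : ℝ)) / (db : ℝ))))
    < (da : ℝ) := by
  have hdbR : (0:ℝ) < db := by exact_mod_cast hdb
  set h : Fin M → ℝ := fun j => 2 * (min (hammingNorm (E j)) db : ℝ) / db with hh
  -- wt(E j) as a distance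
  have hwt : ∀ j, hammingDist (W j + E j) (W j) = hammingNorm (E j) := by
    intro j
    rw [hammingDist_comm, hammingDist_eq_hammingNorm]
    simp
  -- on failure rows, db ≤ 2 * wt(E j)
  have hfailwt : ∀ j ∈ fail, db ≤ 2 * hammingNorm (E j) := by
    intro j hj
    by_contra hcon
    exact hdec2 j hj ⟨W j, hW j, by rw [hwt j]; omega⟩
  have hfail1 : ∀ j ∈ fail, (1:ℝ) ≤ h j := by
    intro j hj
    have h1 : db ≤ 2 * min (hammingNorm (E j)) db := by
      have := hfailwt j hj; omega
    rw [hh]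
    rw [le_div_iff₀ hdbR]
    have : (db:ℝ) ≤ 2 * (min (hammingNorm (E j)) db : ℝ) := by exact_mod_cast h1
    linarith
  have hcor : ∀ j, What j = W j →
      (1 - (if j ∈ fail then 0 else
        ((db : ℝ) - 2 * (hammingDist (W j + E j) (What j) : ℝ)) / (db : ℝ))) ≤ h j := by
    intro j hj
    by_cases hf : j ∈ fail
    · simpa [hf] using hfail1 j hf
    · simp only [hf, if_false]
      obtain ⟨_, hd⟩ := hdec1 j hf
      rw [hj, hwt j] at hd ⊢
      have hwE : (hammingNorm (E j):ℝ) ≤ db := by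
        have : hammingNorm (E j) ≤ db := by omega
        exact_mod_cast this
      rw [hh]
      simp only [min_eq_left hwE]
      have heq : 1 - ((db:ℝ) - 2*(hammingNorm (E j)))/db
          = 2*((hammingNorm (E j)):ℝ)/db := by
        field_simp
        ring
      rw [heq]
  have hwrong : ∀ j, What j ≠ W j →
      (1 + (if j ∈ fail then 0 else
        ((db : ℝ) - 2 * (hammingDist (W j + E j) (What j) : ℝ)) / (db : ℝ))) ≤ h j := by
    intro j hj
    by_cases hf : j ∈ fail
    · simpa [hf] using hfail1 j hf
    · simp only [hf, if_false]
      obtain ⟨hWhat, hd⟩ := hdec1 j hf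
      -- triangle : db ≤ wt(E j) + dist(R, What)
      have htri : db ≤ hammingNorm (E j) + hammingDist (W j + E j) (What j) := by
        have h1 : db ≤ hammingDist (W j) (What j) :=
          hB _ (hW j) _ hWhat (Ne.symm hj)
        have h2 : hammingDist (W j) (What j) ≤
            hammingDist (W j) (W j + E j) + hammingDist (W j + E j) (What j) :=
          hammingDist_triangle _ _ _
        have h3 : hammingDist (W j) (W j + E j) = hammingNorm (E j) := by
          rw [hammingDist_comm, hwt j]
        omega
      set d := hammingDist (W j + E j) (What j)
      have hmin : (db:ℝ) - d ≤ min ((hammingNorm (E j):ℝ)) (db:ℝ) := by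
        have h4 : (db:ℝ) ≤ (hammingNorm (E j) : ℝ) + d := by exact_mod_cast htri
        have h0 : (0:ℝ) ≤ (d:ℝ) := Nat.cast_nonneg _
        exact le_min (by linarith) (by linarith)
      rw [hh]
      rw [le_div_iff₀ hdbR]
      have expand : (1 + ((db:ℝ) - 2*d)/db) * db = 2*db - 2*d := by
        field_simp; ring
      rw [expand]
      linarith
  have step1 : (∑ j ∈ Finset.univ.filter fun j => What j = W j,
      (1 - (if j ∈ fail then 0 else
        ((db : ℝ) - 2 * (hammingDist (W j + E j) (What j) : ℝ)) / (db : ℝ)))) +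
    (∑ j ∈ Finset.univ.filter fun j => What j ≠ W j,
      (1 + (if j ∈ fail then 0 else
        ((db : ℝ) - 2 * (hammingDist (W j + E j) (What j) : ℝ)) / (db : ℝ))))
      ≤ ∑ j, h j := by
    have a1 := Finset.sum_le_sum (s := Finset.univ.filter fun j => What j = W j)
      (fun j hj => hcor j (Finset.mem_filter.mp hj).2)
    have a2 := Finset.sum_le_sum (s := Finset.univ.filter fun j => What j ≠ W j)
      (fun j hj => hwrong j (Finset.mem_filter.mp hj).2)
    have a3 := Finset.sum_filter_add_sum_filter_not Finset.univ
      (fun j => What j = W j) h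
    linarith
  refine lt_of_le_of_lt step1 ?_
  have : ∑ j, h j = (2 * (∑ j, min (hammingNorm (E j)) db : ℕ) : ℝ) / db := by
    rw [hh, ← Finset.sum_div, ← Finset.mul_sum]
    push_cast
    ring
  rw [this, div_lt_iff₀ hdbR]
  exact_mod_cast hE
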